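/- arXiv:1803.08347 — 5 statements merged into one kernel-verified Lean document; each statement's English description precedes it below -/
import Mathlib

section
/- Let G be an abelian group. If G is torsion-free, then G has the matching property: for any two non-empty finite subsets A and B of G with |A| = |B| and 0 ∉ B, there exists a matching from A to B. -/
lemma exists_dual_ne_zero {M : Type*} [AddCommGroup M] [Module ℤ M] [Module.Free ℤ M]
    {v : M} (hv : v ≠ 0) : ∃ μ : M →ₗ[ℤ] ℚ, μ v ≠ 0 := by
  classical
  let b := Module.Free.chooseBasis ℤ M
  obtain ⟨i, hi⟩ : ∃ i, b.repr v i ≠ 0 := by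
    by_contra h'
    push_neg at h'
    exact hv (b.repr.map_eq_zero_iff.mp (by ext i; simpa using h' i))
  refine ⟨(Algebra.linearMap ℤ ℚ).comp (b.coord i), ?_⟩
  simpa [Module.Basis.coord_apply] using (Int.cast_ne_zero (α := ℚ)).2 hi

lemma exists_functional {M : Type*} [AddCommGroup M] [Module ℤ M] [Module.Free ℤ M]
    (V : Finset M) : ∃ φ : M →ₗ[ℤ] ℚ, ∀ v ∈ V, v ≠ 0 → φ v ≠ 0 := by
  classical
  induction V using Finset.induction with
  | empty => exact ⟨0, by simp⟩
  | @insert v V' hvV' ih =>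
    obtain ⟨ψ, hψ⟩ := ih
    by_cases hv0 : v = 0
    · exact ⟨ψ, fun w hw hw0 => hψ w (by
        rcases Finset.mem_insert.mp hw with h | h
        · exact absurd (h.trans hv0) hw0
        · exact h) hw0⟩
    · obtain ⟨μ, hμ⟩ := exists_dual_ne_zero hv0
      obtain ⟨q, hq⟩ := Infinite.exists_notMem_finset
        ((insert v V').image (fun w => -(ψ w) / (μ w)))
      refine ⟨ψ + q • μ, fun w hw hw0 => ?_⟩
      have hform : (ψ + q • μ) w = ψ w + q * μ w := by
        simp [smul_eq_mul]
      rw [hform]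
      intro h
      by_cases hμw : μ w = 0
      · have hwV' : w ∈ V' := by
          rcases Finset.mem_insert.mp hw with h' | h'
          · exact absurd (h' ▸ hμw) hμ
          · exact h'
        exact hψ w hwV' hw0 (by simpa [hμw] using h)
      · apply hq
        refine Finset.mem_image.mpr ⟨w, hw, ?_⟩
        field_simp
        linarith [h]

lemma key_card {G : Type*} [AddCommGroup G] {A S T : Finset G} (φ : G → ℚ)
    (hSA : S ⊆ A) (hSne : S.Nonempty)
    (hT0 : ∀ t ∈ T, φ t ≠ 0)
    (hadd : ∀ a ∈ S, ∀ t ∈ T, φ (a + t) = φ a + φ t)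
    (hST : ∀ a ∈ S, ∀ t ∈ T, a + t ∈ A) :
    S.card + T.card ≤ A.card := by
  classical
  obtain ⟨ap, hapS, hap⟩ := S.exists_max_image φ hSne
  obtain ⟨am, hamS, ham⟩ := S.exists_min_image φ hSne
  set Tp := T.filter (fun t => 0 < φ t) with hTpdef
  set Tn := T.filter (fun t => ¬ 0 < φ t) with hTndef
  have hTn_neg : ∀ t ∈ Tn, φ t < 0 := by
    intro t ht
    rw [hTndef, Finset.mem_filter] at ht
    exact lt_of_le_of_ne (not_lt.mp ht.2) (hT0 t ht.1)
  have hTcard : Tp.card + Tn.card = T.card :=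
    Finset.card_filter_add_card_filter_not _
  have hTpT : Tp ⊆ T := Finset.filter_subset _ _
  have hTnT : Tn ⊆ T := Finset.filter_subset _ _
  set U1 := Tn.image (fun t => am + t) with hU1def
  set U2 := Tp.image (fun t => ap + t) with hU2def
  have hc1 : U1.card = Tn.card := Finset.card_image_of_injective _ (add_right_injective am)
  have hc2 : U2.card = Tp.card := Finset.card_image_of_injective _ (add_right_injective ap)
  have hU1φ : ∀ x ∈ U1, φ x < φ am := by
    intro x hx
    obtain ⟨t, ht, rfl⟩ := Finset.mem_image.mp hx
    rw [hadd am hamS t (hTnT ht)]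
    linarith [hTn_neg t ht]
  have hU2φ : ∀ x ∈ U2, φ ap < φ x := by
    intro x hx
    obtain ⟨t, ht, rfl⟩ := Finset.mem_image.mp hx
    rw [hadd ap hapS t (hTpT ht)]
    have := (Finset.mem_filter.mp ht).2
    linarith
  have d1 : Disjoint S U1 := by
    rw [Finset.disjoint_left]
    intro x hxS hxU1
    exact absurd (ham x hxS) (not_le.mpr (hU1φ x hxU1))
  have d2 : Disjoint (S ∪ U1) U2 := by
    rw [Finset.disjoint_left]
    intro x hx hxU2
    rcases Finset.mem_union.mp hx with h | h
    · exact absurd (hap x h) (not_le.mpr (hU2φ x hxU2))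
    · have := hU1φ x h
      have := hU2φ x hxU2
      have := ham ap hapS
      linarith
  have hsub : S ∪ U1 ∪ U2 ⊆ A := by
    intro x hx
    rcases Finset.mem_union.mp hx with h | h
    · rcases Finset.mem_union.mp h with h' | h'
      · exact hSA h'
      · obtain ⟨t, ht, rfl⟩ := Finset.mem_image.mp h'
        exact hST am hamS t (hTnT ht)
    · obtain ⟨t, ht, rfl⟩ := Finset.mem_image.mp h
      exact hST ap hapS t (hTpT ht)
  calc S.card + T.card = S.card + (Tp.card + Tn.card) := by rw [hTcard]
    _ = S.card + U1.card + U2.card := by rw [hc1, hc2]; ring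
    _ = (S ∪ U1).card + U2.card := by rw [Finset.card_union_of_disjoint d1]
    _ = (S ∪ U1 ∪ U2).card := by rw [Finset.card_union_of_disjoint d2]
    _ ≤ A.card := Finset.card_le_card hsub

/-- A matching from `A` to `B` in an additive abelian group is a bijection
`f : A → B` (encoded as a function `G → G` that is bijective from `A` to `B`)
such that `a + f a ∉ A` for every `a ∈ A`. -/
def IsMatching {G : Type*} [AddCommGroup G] (A B : Finset G) (f : G → G) : Prop :=
  Set.BijOn f (A : Set G) (B : Set G) ∧ ∀ a ∈ A, a + f a ∉ A

/-- The older Mathlib's `AddMonoid.IsTorsionFree` (removed since): no nonzero element has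
finite additive order. -/
def AddMonoid.IsTorsionFree (G : Type*) [AddMonoid G] : Prop :=
  ∀ g : G, g ≠ 0 → ¬IsOfFinAddOrder g

/-- **Torsion-free abelian groups have the matching property.**
If `G` is a torsion-free abelian group, then for any two non-empty finite subsets
`A` and `B` of `G` with `|A| = |B|` and `0 ∉ B`, there exists a matching from `A` to `B`. -/
theorem torsionFree_hasMatchingProperty {G : Type*} [AddCommGroup G]
    (hG : AddMonoid.IsTorsionFree G)
    (A B : Finset G) (hA : A.Nonempty) (hB : B.Nonempty)
    (hcard : A.card = B.card) (h0 : (0 : G) ∉ B) :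
    ∃ f : G → G, IsMatching A B f := by
  classical
  set H : AddSubgroup G := AddSubgroup.closure ((A ∪ B : Finset G) : Set G) with hHdef
  have hmemA : ∀ a ∈ A, a ∈ H := fun a ha =>
    AddSubgroup.subset_closure (by simp [ha])
  have hmemB : ∀ b ∈ B, b ∈ H := fun b hb =>
    AddSubgroup.subset_closure (by simp [hb])
  haveI : AddGroup.FG ↥H := by rw [hHdef]; infer_instance
  haveI : Module.Finite ℤ ↥H := Module.Finite.iff_addGroup_fg.mpr ‹_›
  haveI : NoZeroSMulDivisors ℤ G := by
    constructor
    intro n x h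
    by_contra hc
    push_neg at hc
    exact hG x hc.2 (isOfFinAddOrder_iff_zsmul_eq_zero.mpr ⟨n, hc.1, h⟩)
  haveI : NoZeroSMulDivisors ℤ ↥H := by
    constructor
    intro n x h
    have h' : n • (x : G) = 0 := by
      have := congrArg (Subtype.val) h
      simpa using this
    rcases smul_eq_zero.mp h' with h'' | h''
    · exact Or.inl h''
    · exact Or.inr (Subtype.ext h'')
  obtain ⟨φ₀, hφ₀⟩ := exists_functional (M := ↥H)
    (B.attach.image (fun b : {x // x ∈ B} => (⟨b.1, hmemB b.1 b.2⟩ : ↥H)))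
  set φ : G → ℚ := fun x => if h : x ∈ H then φ₀ ⟨x, h⟩ else 0 with hφdef
  have hφeq : ∀ x (h : x ∈ H), φ x = φ₀ ⟨x, h⟩ := fun x h => dif_pos h
  have hφB : ∀ b ∈ B, φ b ≠ 0 := by
    intro b hb
    rw [hφeq b (hmemB b hb)]
    refine hφ₀ _ (Finset.mem_image.mpr ⟨⟨b, hb⟩, Finset.mem_attach _ _, rfl⟩) ?_
    intro h
    apply h0
    have : b = (0 : G) := by simpa using congrArg Subtype.val h
    rwa [← this]
  have hφadd : ∀ x y, x ∈ H → y ∈ H → φ (x + y) = φ x + φ y := by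
    intro x y hx hy
    rw [hφeq x hx, hφeq y hy, hφeq (x + y) (add_mem hx hy)]
    have : (⟨x + y, add_mem hx hy⟩ : ↥H) = ⟨x, hx⟩ + ⟨y, hy⟩ := rfl
    rw [this, map_add]
  -- Hall's condition
  set t : {x // x ∈ A} → Finset G := fun a => B.filter (fun b => (a : G) + b ∉ A) with htdef
  have hall : ∀ s : Finset {x // x ∈ A}, s.card ≤ (s.biUnion t).card := by
    intro s
    rcases s.eq_empty_or_nonempty with rfl | hsne
    · simp
    set S : Finset G := s.image Subtype.val with hSdef
    have hScard : S.card = s.card := Finset.card_image_of_injective _ Subtype.val_injective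
    have hSA : S ⊆ A := by
      intro x hx
      obtain ⟨a, _, rfl⟩ := Finset.mem_image.mp hx
      exact a.2
    set T : Finset G := B.filter (fun b => ∀ a ∈ S, a + b ∈ A) with hTdef
    have hkey : S.card + T.card ≤ A.card := by
      refine key_card φ hSA (hsne.image _) ?_ ?_ ?_
      · intro x hx
        exact hφB x (Finset.mem_filter.mp hx).1
      · intro a ha x hx
        exact hφadd a x (hmemA a (hSA ha)) (hmemB x (Finset.mem_filter.mp hx).1)
      · intro a ha x hx
        exact (Finset.mem_filter.mp hx).2 a ha
    have hTB : T ⊆ B := Finset.filter_subset _ _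
    have hsub : B \ T ⊆ s.biUnion t := by
      intro b hb
      rw [Finset.mem_sdiff] at hb
      obtain ⟨hbB, hbT⟩ := hb
      have : ¬ ∀ a ∈ S, a + b ∈ A := by
        intro hcon
        exact hbT (Finset.mem_filter.mpr ⟨hbB, hcon⟩)
      push_neg at this
      obtain ⟨a, haS, hanA⟩ := this
      obtain ⟨a', ha's, rfl⟩ := Finset.mem_image.mp haS
      exact Finset.mem_biUnion.mpr ⟨a', ha's, Finset.mem_filter.mpr ⟨hbB, hanA⟩⟩
    have h1 : s.card ≤ B.card - T.card := by
      rw [← hScard]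
      omega
    calc s.card ≤ B.card - T.card := h1
      _ = (B \ T).card := (Finset.card_sdiff_of_subset hTB).symm
      _ ≤ (s.biUnion t).card := Finset.card_le_card hsub
  obtain ⟨f₀, hf₀inj, hf₀mem⟩ := (Finset.all_card_le_biUnion_card_iff_exists_injective t).mp hall
  set f : G → G := fun x => if h : x ∈ A then f₀ ⟨x, h⟩ else x with hfdef
  have hfeq : ∀ x (h : x ∈ A), f x = f₀ ⟨x, h⟩ := fun x h => dif_pos h
  have hfB : ∀ x (h : x ∈ A), f x ∈ B := by
    intro x h
    rw [hfeq x h]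
    exact (Finset.mem_filter.mp (hf₀mem ⟨x, h⟩)).1
  have hinj : Set.InjOn f (A : Set G) := by
    intro x hx y hy hxy
    rw [Finset.mem_coe] at hx hy
    rw [hfeq x hx, hfeq y hy] at hxy
    exact congrArg Subtype.val (hf₀inj hxy)
  have hmaps : Set.MapsTo f (A : Set G) (B : Set G) := by
    intro x hx
    rw [Finset.mem_coe] at hx
    exact Finset.mem_coe.mpr (hfB x hx)
  have himg : A.image f = B := by
    apply Finset.eq_of_subset_of_card_le
    · intro y hy
      obtain ⟨x, hx, rfl⟩ := Finset.mem_image.mp hy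
      exact hfB x hx
    · rw [Finset.card_image_of_injOn (by simpa using hinj), hcard]
  have hsurj : Set.SurjOn f (A : Set G) (B : Set G) := by
    rw [← himg]
    intro y hy
    rw [Finset.coe_image] at hy
    exact hy
  refine ⟨f, ⟨hmaps, hinj, hsurj⟩, ?_⟩
  intro a ha
  rw [hfeq a ha]
  exact (Finset.mem_filter.mp (hf₀mem ⟨a, ha⟩)).2
end

section
/- Let p be a prime. The cyclic group ℤ/pℤ has the matching property: for any two non-empty subsets A and B of ℤ/pℤ with |A| = |B| and 0 ∉ B, there exists a matching from A to B. -/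
open Pointwise


/-- **`ℤ/pℤ` has the matching property for `p` prime.**
For any two non-empty subsets `A` and `B` of `ℤ/pℤ` with `|A| = |B|` and `0 ∉ B`,
there exists a matching from `A` to `B`. -/
theorem zmod_prime_hasMatchingProperty (p : ℕ) (hp : p.Prime)
    (A B : Finset (ZMod p)) (hA : A.Nonempty) (hB : B.Nonempty)
    (hcard : A.card = B.card) (h0 : (0 : ZMod p) ∉ B) :
    ∃ f : ZMod p → ZMod p, IsMatching A B f := by
  classical
  haveI : Fact p.Prime := ⟨hp⟩
  have hcardZ : Fintype.card (ZMod p) = p := ZMod.card p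
  have hAp : A.card < p := by
    have hle : A.card ≤ p := by have := Finset.card_le_univ A; omega
    rcases lt_or_eq_of_le hle with h | h
    · exact h
    · exfalso
      have : B = Finset.univ := Finset.eq_univ_of_card B (by omega)
      exact h0 (this ▸ Finset.mem_univ 0)
  set t : ↥A → Finset (ZMod p) := fun a => B.filter (fun b => (a : ZMod p) + b ∉ A) with ht
  have hall : ∀ s : Finset ↥A, s.card ≤ (s.biUnion t).card := by
    intro s
    rcases s.eq_empty_or_nonempty with rfl | hs
    · simp
    by_contra hcon
    push_neg at hcon
    set N := s.biUnion t with hN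
    have hNB : N ⊆ B := by
      intro b hb
      rcases Finset.mem_biUnion.mp hb with ⟨a, _, hab⟩
      exact Finset.mem_of_mem_filter b hab
    set S := s.image (Subtype.val) with hS
    have hScard : S.card = s.card := Finset.card_image_of_injective s Subtype.val_injective
    set T := B \ N with hT
    have hTcard : T.card = B.card - N.card := Finset.card_sdiff_of_subset hNB
    have h0T : (0 : ZMod p) ∉ T := fun h => h0 (Finset.mem_sdiff.mp h).1
    have hsub : S + insert 0 T ⊆ A := by
      intro x hx
      rcases Finset.mem_add.mp hx with ⟨a, ha, b, hb, rfl⟩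
      rcases Finset.mem_image.mp ha with ⟨a', ha', rfl⟩
      rcases Finset.mem_insert.mp hb with rfl | hbT
      · simpa using a'.2
      · have hbB := (Finset.mem_sdiff.mp hbT).1
        have hbN := (Finset.mem_sdiff.mp hbT).2
        by_contra hnot
        exact hbN (Finset.mem_biUnion.mpr ⟨a', ha', Finset.mem_filter.mpr ⟨hbB, hnot⟩⟩)
    have hSne : S.Nonempty := hs.image _
    have hTne : (insert (0 : ZMod p) T).Nonempty := Finset.insert_nonempty _ _
    have hcd := ZMod.cauchy_davenport hp hSne hTne
    have hIcard : (insert (0 : ZMod p) T).card = T.card + 1 := Finset.card_insert_of_notMem h0T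
    have hle : (S + insert 0 T).card ≤ A.card := Finset.card_le_card hsub
    have hNle : N.card ≤ B.card := Finset.card_le_card hNB
    have hsA : s.card ≤ A.card := by
      have := Finset.card_le_card (Finset.image_subset_iff.mpr (fun a _ => a.2) : S ⊆ A)
      omega
    rw [hScard, hIcard] at hcd
    omega
  obtain ⟨f0, hf0inj, hf0mem⟩ := (Finset.all_card_le_biUnion_card_iff_exists_injective t).mp hall
  have hf0B : ∀ a : ↥A, f0 a ∈ B := fun a => Finset.mem_of_mem_filter _ (hf0mem a)
  have hf0A : ∀ a : ↥A, (a : ZMod p) + f0 a ∉ A := fun a =>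
    (Finset.mem_filter.mp (hf0mem a)).2
  set f : ZMod p → ZMod p := fun x => if h : x ∈ A then f0 ⟨x, h⟩ else 0 with hf
  have hmaps : ∀ a ∈ A, f a ∈ B := by
    intro a ha
    have : f a = f0 ⟨a, ha⟩ := dif_pos ha
    rw [this]
    exact hf0B ⟨a, ha⟩
  have hfa : ∀ a (h : a ∈ A), f a = f0 ⟨a, h⟩ := fun a h => dif_pos h
  have hinj : Set.InjOn f (A : Set (ZMod p)) := by
    intro a ha b hb hab
    simp only [Finset.mem_coe] at ha hb
    rw [hfa a ha, hfa b hb] at hab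
    exact Subtype.ext_iff.mp (hf0inj hab)
  have himg : A.image f = B := by
    apply Finset.eq_of_subset_of_card_le
    · intro b hb
      rcases Finset.mem_image.mp hb with ⟨a, ha, rfl⟩
      exact hmaps a ha
    · rw [Finset.card_image_of_injOn hinj]; omega
  refine ⟨f, ⟨⟨fun a ha => ?_, hinj, fun b hb => ?_⟩, fun a ha => ?_⟩⟩
  · exact hmaps a ha
  · rcases Finset.mem_image.mp (himg ▸ (hb : b ∈ B)) with ⟨a, ha, rfl⟩
    exact ⟨a, ha, rfl⟩
  · rw [hfa a ha]
    exact hf0A ⟨a, ha⟩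
end

section
/- Let G be an abelian group which has the matching property. Then G is either torsion-free or a cyclic group of prime order. -/
/-- `G` has the matching property if for any non-empty finite subsets `A`, `B` of `G`
with `|A| = |B|` and `0 ∉ B`, there exists at least one matching from `A` to `B`. -/
def HasMatchingProperty (G : Type*) [AddCommGroup G] : Prop :=
  ∀ A B : Finset G, A.Nonempty → B.Nonempty → A.card = B.card → (0 : G) ∉ B →
    ∃ f : G → G, IsMatching A B f

/-- **Groups with the matching property are torsion-free or cyclic of prime order.**
If an abelian group `G` has the matching property, then `G` is either torsion-free
or a cyclic group of prime order. -/
theorem hasMatchingProperty_torsionFree_or_prime_cyclic (G : Type*) [AddCommGroup G]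
    (hG : HasMatchingProperty G) :
    AddMonoid.IsTorsionFree G ∨ (IsAddCyclic G ∧ ∃ p : ℕ, p.Prime ∧ Nat.card G = p) := by
  classical
  by_cases htf : AddMonoid.IsTorsionFree G
  · exact Or.inl htf
  right
  rw [AddMonoid.IsTorsionFree] at htf
  push_neg at htf
  obtain ⟨x, hx0, hx⟩ := htf
  have hn : addOrderOf x ≠ 0 := hx.addOrderOf_pos.ne'
  have hn1 : addOrderOf x ≠ 1 := fun h => hx0 (AddMonoid.addOrderOf_eq_one_iff.mp h)
  have hpprime : (addOrderOf x).minFac.Prime := Nat.minFac_prime hn1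
  obtain ⟨y, hyo⟩ : ∃ y : G, addOrderOf y = (addOrderOf x).minFac := by
    refine ⟨(addOrderOf x / (addOrderOf x).minFac) • x, ?_⟩
    have hdvd : (addOrderOf x).minFac ∣ addOrderOf x := Nat.minFac_dvd _
    have hne : addOrderOf x / (addOrderOf x).minFac ≠ 0 :=
      (Nat.div_pos (Nat.minFac_le (Nat.pos_of_ne_zero hn)) hpprime.pos).ne'
    rw [addOrderOf_nsmul' x hne, Nat.gcd_eq_right (Nat.div_dvd_of_dvd hdvd),
      Nat.div_div_self hdvd hn]
  set p := (addOrderOf x).minFac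
  have hyfin : IsOfFinAddOrder y := by
    rw [← addOrderOf_pos_iff, hyo]; exact hpprime.pos
  have hfin : (AddSubgroup.zmultiples y : Set G).Finite := hyfin.finite_zmultiples
  set A : Finset G := hfin.toFinset with hA
  have hmemA : ∀ a : G, a ∈ A ↔ a ∈ AddSubgroup.zmultiples y := by
    intro a; simp [hA]
  have hcardA : A.card = p := by
    have h1 : Nat.card (AddSubgroup.zmultiples y) = A.card :=
      Nat.card_eq_card_finite_toFinset hfin
    rw [Nat.card_zmultiples, hyo] at h1
    exact h1.symm
  have h0A : (0 : G) ∈ A := (hmemA 0).mpr (AddSubgroup.zero_mem _)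
  have hyA : y ∈ A := (hmemA y).mpr (AddSubgroup.mem_zmultiples y)
  have hy0 : y ≠ 0 := by
    intro h; rw [h, addOrderOf_zero] at hyo; exact hpprime.one_lt.ne' hyo.symm
  have hall : ∀ g : G, g ∈ AddSubgroup.zmultiples y := by
    intro g
    by_contra hg
    have hgA : g ∉ A := fun h => hg ((hmemA g).mp h)
    set B : Finset G := insert g (A.erase 0) with hB
    have hgB : g ∈ B := Finset.mem_insert_self _ _
    have hcardB : B.card = p := by
      rw [hB, Finset.card_insert_of_notMem (fun h => hgA (Finset.mem_of_mem_erase h)),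
        Finset.card_erase_of_mem h0A, hcardA]
      have := hpprime.pos; omega
    have h0B : (0 : G) ∉ B := by
      rw [hB, Finset.mem_insert]
      rintro (h | h)
      · exact hg (h ▸ AddSubgroup.zero_mem _)
      · exact (Finset.notMem_erase 0 A) h
    obtain ⟨f, hbij, hmatch⟩ := hG A B ⟨0, h0A⟩ ⟨g, hgB⟩
      (hcardA.trans hcardB.symm) h0B
    have hfA : ∀ a ∈ A, f a = g := by
      intro a ha
      have hfB : f a ∈ B := hbij.mapsTo ha
      have hfnA : f a ∉ A := by
        intro hfa
        exact hmatch a ha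
          ((hmemA _).mpr (AddSubgroup.add_mem _ ((hmemA a).mp ha) ((hmemA _).mp hfa)))
      rw [hB, Finset.mem_insert] at hfB
      rcases hfB with h | h
      · exact h
      · exact absurd (Finset.mem_of_mem_erase h) hfnA
    exact hy0 (hbij.injOn h0A hyA (by rw [hfA 0 h0A, hfA y hyA])).symm
  have htop : AddSubgroup.zmultiples y = ⊤ := (AddSubgroup.eq_top_iff' _).mpr hall
  refine ⟨⟨y, fun g => (AddSubgroup.mem_zmultiples_iff).mp (hall g)⟩, p, hpprime, ?_⟩
  have h2 := Nat.card_zmultiples y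
  rw [htop, hyo] at h2
  rw [← h2]
  exact Nat.card_congr AddSubgroup.topEquiv.toEquiv.symm
end

section
/- Let K ⊆ L be a field extension such that L contains no intermediate field M with K ⊊ M and M finite-dimensional over K. Then the extension K ⊆ L has the linear matching property: for any two n-dimensional K-subspaces A and B of L with n ≥ 1 and 1 ∉ B, A is matched to B. -/
open scoped Pointwise

/-- A basis `𝒜` of `A` is matched to a basis `ℬ` of `B` if for every `i`,
`aᵢ⁻¹A ∩ B ⊆ ⟨b₁, …, b̂ᵢ, …, bₙ⟩` (the `K`-span of the `bⱼ` with `j ≠ i`). -/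
def IsMatchedBasis {K L : Type*} [Field K] [Field L] [Algebra K L] {n : ℕ}
    (A B : Subspace K L) (𝒜 : Module.Basis (Fin n) K A) (ℬ : Module.Basis (Fin n) K B) : Prop :=
  ∀ i : Fin n,
    ((𝒜 i : L)⁻¹ • (A : Set L)) ∩ (B : Set L) ⊆
      (Submodule.span K (Set.range fun j : {j : Fin n // j ≠ i} => (ℬ j.1 : L)) : Set L)

/-- `A` is matched to `B` if for every basis `𝒜` of `A` there exists a basis `ℬ` of `B`
such that `𝒜` is matched to `ℬ`. -/
def IsMatchedTo {K L : Type*} [Field K] [Field L] [Algebra K L] (A B : Subspace K L) : Prop :=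
  ∀ (n : ℕ) (𝒜 : Module.Basis (Fin n) K A), ∃ ℬ : Module.Basis (Fin n) K B, IsMatchedBasis A B 𝒜 ℬ

section Helpers

open Module Submodule

variable {K : Type*} [Field K]

theorem finrank_map_of_injective {E F : Type*} [AddCommGroup E] [Module K E]
    [AddCommGroup F] [Module K F] (f : E →ₗ[K] F) (hf : Function.Injective f)
    (X : Submodule K E) : finrank K (X.map f) = finrank K X :=
  (LinearEquiv.finrank_eq (Submodule.equivMapOfInjective f hf X)).symm

theorem finrank_map_add_finrank_inf_ker {E F : Type*} [AddCommGroup E] [Module K E]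
    [AddCommGroup F] [Module K F] (f : E →ₗ[K] F) (X : Submodule K E)
    [FiniteDimensional K X] :
    finrank K (X.map f) + finrank K ↥(X ⊓ LinearMap.ker f) = finrank K X := by
  have h := LinearMap.finrank_range_add_finrank_ker (f.comp X.subtype)
  rw [LinearMap.range_comp, Submodule.range_subtype] at h
  have h2 : finrank K ↥(LinearMap.ker (f.comp X.subtype)) =
      finrank K ↥(X ⊓ LinearMap.ker f) := by
    rw [LinearMap.ker_comp,
      ← finrank_map_of_injective X.subtype (Submodule.injective_subtype X),
      Submodule.map_comap_subtype]
  rw [h2] at h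
  exact h

theorem submoduleMapFinsetSup {E F : Type*} [AddCommGroup E] [Module K E]
    [AddCommGroup F] [Module K F] (f : E →ₗ[K] F) {ι : Type*} (S : Finset ι)
    (W : ι → Submodule K E) : (S.sup W).map f = S.sup fun i => (W i).map f := by
  induction S using Finset.cons_induction with
  | empty => simp
  | cons a s ha ih => simp [Finset.sup_cons, Submodule.map_sup, ih]

/-- Rado's theorem for vector spaces: a family of subspaces satisfying the Hall-type
rank condition admits a linearly independent transversal. -/
theorem exists_linearIndependent_transversal :
    ∀ (m : ℕ) {ι : Type} [Fintype ι] (_ : Fintype.card ι = m)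
      {E : Type*} [AddCommGroup E] [Module K E] [FiniteDimensional K E]
      (W : ι → Submodule K E),
      (∀ S : Finset ι, S.card ≤ finrank K (S.sup W : Submodule K E)) →
      ∃ φ : ι → E, (∀ i, φ i ∈ W i) ∧ LinearIndependent K φ := by
  intro m
  induction m using Nat.strong_induction_on with
  | _ m IH =>
  intro ι _ hcard E _ _ _ W hW
  classical
  rcases Nat.eq_zero_or_pos m with hm | hm
  · have hE : IsEmpty ι := Fintype.card_eq_zero_iff.mp (by omega)
    exact ⟨fun _ => 0, fun i => (hE.elim i), linearIndependent_empty_type⟩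
  by_cases htight : ∃ S : Finset ι, S.Nonempty ∧ S ≠ Finset.univ ∧
      finrank K (S.sup W : Submodule K E) = S.card
  · obtain ⟨S, hSne, hSuniv, hSeq⟩ := htight
    set F : Submodule K E := S.sup W with hF
    have hWF : ∀ i ∈ S, W i ≤ F := fun i hi => Finset.le_sup hi
    set V : {i // i ∈ S} → Submodule K ↥F := fun j => (W j.1).comap F.subtype with hV
    have hmapV : ∀ T : Finset {i // i ∈ S},
        (T.sup V).map F.subtype = (T.image Subtype.val).sup W := by
      intro T
      rw [submoduleMapFinsetSup, Finset.sup_image]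
      refine Finset.sup_congr rfl fun j _ => ?_
      show ((W j.1).comap F.subtype).map F.subtype = W j.1
      rw [Submodule.map_comap_subtype]
      exact inf_eq_right.mpr (hWF j.1 j.2)
    have hcard1 : Fintype.card {i // i ∈ S} = S.card := Fintype.card_coe S
    have hlt1 : S.card < m := by
      have := Finset.card_lt_card (Finset.ssubset_univ_iff.mpr hSuniv)
      rwa [Finset.card_univ, hcard] at this
    have hHallV : ∀ T : Finset {i // i ∈ S},
        T.card ≤ finrank K (T.sup V : Submodule K ↥F) := by
      intro T
      have h1 : finrank K ((T.sup V).map F.subtype : Submodule K E) =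
          finrank K (T.sup V : Submodule K ↥F) :=
        finrank_map_of_injective _ (Submodule.injective_subtype F) _
      rw [← h1, hmapV]
      calc T.card = (T.image Subtype.val).card :=
            (Finset.card_image_of_injective _ Subtype.val_injective).symm
        _ ≤ _ := hW _
    obtain ⟨φ₁, hφ₁mem, hφ₁ind⟩ := IH S.card hlt1 hcard1 V hHallV
    set π := F.mkQ with hπ
    set U : {i // i ∉ S} → Submodule K (E ⧸ F) := fun j => (W j.1).map π with hU
    have hcard2 : Fintype.card {i // i ∉ S} = m - S.card := by
      have h1 : Fintype.card {i // i ∉ S} = Fintype.card ι - Fintype.card {i // i ∈ S} :=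
        Fintype.card_subtype_compl _
      rw [h1, hcard1, hcard]
    have hlt2 : m - S.card < m := by
      have := Finset.card_pos.mpr hSne; omega
    have hHallU : ∀ T : Finset {i // i ∉ S},
        T.card ≤ finrank K (T.sup U : Submodule K (E ⧸ F)) := by
      intro T
      set T' := T.image Subtype.val with hT'
      have hTT' : T'.card = T.card := Finset.card_image_of_injective _ Subtype.val_injective
      have hdisj : Disjoint T' S := by
        rw [Finset.disjoint_left]
        rintro a ha haS
        obtain ⟨j, _, rfl⟩ := Finset.mem_image.mp ha
        exact j.2 haS
      set X := T'.sup W with hX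
      have hmapU : T.sup U = X.map π := by
        rw [hX, hT', Finset.sup_image, submoduleMapFinsetSup]
        rfl
      have e1 : finrank K (X.map π : Submodule K (E ⧸ F)) + finrank K ↥(X ⊓ F)
          = finrank K X := by
        have h := finrank_map_add_finrank_inf_ker π X
        rwa [Submodule.ker_mkQ] at h
      have e2 : finrank K ↥(X ⊔ F) + finrank K ↥(X ⊓ F) = finrank K X + finrank K F :=
        Submodule.finrank_sup_add_finrank_inf_eq X F
      have e4 : (T' ∪ S).card ≤ finrank K ((T' ∪ S).sup W : Submodule K E) := hW _
      rw [Finset.sup_union, Finset.card_union_of_disjoint hdisj, ← hX, ← hF] at e4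
      rw [hmapU]
      have hFS : finrank K F = S.card := hSeq
      omega
    obtain ⟨φ₂, hφ₂mem, hφ₂ind⟩ := IH (m - S.card) hlt2 hcard2 U hHallU
    choose χ hχmem hχeq using fun j => Submodule.mem_map.mp (hφ₂mem j)
    set phi : ι → E := fun i => if h : i ∈ S then (φ₁ ⟨i, h⟩ : E) else χ ⟨i, h⟩ with hphi
    have key : ∀ i : ι, π (phi i) = if h : i ∈ S then 0 else φ₂ ⟨i, h⟩ := by
      intro i
      by_cases h : i ∈ S
      · simp only [hphi, dif_pos h]
        exact (Submodule.Quotient.mk_eq_zero F).mpr (φ₁ ⟨i, h⟩).2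
      · simp only [hphi, dif_neg h]
        exact hχeq ⟨i, h⟩
    refine ⟨phi, ?_, ?_⟩
    · intro i
      by_cases h : i ∈ S
      · simp only [hphi, dif_pos h]
        exact hφ₁mem ⟨i, h⟩
      · simp only [hphi, dif_neg h]
        exact hχmem ⟨i, h⟩
    · rw [Fintype.linearIndependent_iff]
      intro g hg
      have h1 : ∑ i : ι, g i • π (phi i) = 0 := by
        have h0 := congrArg π hg
        rw [map_sum, map_zero] at h0
        simpa [map_smul] using h0
      have hzero : ∀ i ∈ S, g i • π (phi i) = 0 := by
        intro i hi; rw [key, dif_pos hi, smul_zero]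
      have h2 : ∑ i ∈ Sᶜ, g i • π (phi i) = 0 := by
        have h3 := Finset.sum_add_sum_compl S (fun i => g i • π (phi i))
        rw [Finset.sum_eq_zero hzero, zero_add] at h3
        exact h3.trans h1
      have hsum2 : ∑ j : {i // i ∉ S}, g j.1 • φ₂ j = 0 := by
        calc ∑ j : {i // i ∉ S}, g j.1 • φ₂ j
            = ∑ j : {i // i ∉ S}, g j.1 • π (phi j.1) :=
              Finset.sum_congr rfl (fun j _ => by rw [key, dif_neg j.2])
          _ = ∑ i ∈ Sᶜ, g i • π (phi i) :=
              (Finset.sum_subtype Sᶜ (fun x => Finset.mem_compl)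
                (fun i => g i • π (phi i))).symm
          _ = 0 := h2
      have hgS : ∀ j : {i // i ∉ S}, g j.1 = 0 :=
        Fintype.linearIndependent_iff.mp hφ₂ind _ hsum2
      have hcompl0 : ∑ i ∈ Sᶜ, g i • phi i = 0 :=
        Finset.sum_eq_zero fun i hi => by
          rw [hgS ⟨i, Finset.mem_compl.mp hi⟩, zero_smul]
      have hsumS : ∑ i ∈ S, g i • phi i = 0 := by
        have h3 := Finset.sum_add_sum_compl S (fun i => g i • phi i)
        rw [hcompl0, add_zero] at h3
        exact h3.trans hg
      have hsum1 : ∑ j : {i // i ∈ S}, g j.1 • φ₁ j = 0 := by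
        rw [← Submodule.coe_eq_zero (p := F)]
        push_cast
        calc ∑ j : {i // i ∈ S}, g j.1 • (φ₁ j : E)
            = ∑ j : {i // i ∈ S}, g j.1 • phi j.1 :=
              Finset.sum_congr rfl (fun j _ => by rw [hphi]; simp only [dif_pos j.2])
          _ = ∑ i ∈ S, g i • phi i :=
              (Finset.sum_subtype S (fun x => Iff.rfl) (fun i => g i • phi i)).symm
          _ = 0 := hsumS
      have hgS' : ∀ j : {i // i ∈ S}, g j.1 = 0 :=
        Fintype.linearIndependent_iff.mp hφ₁ind _ hsum1
      intro i
      by_cases h : i ∈ S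
      · exact hgS' ⟨i, h⟩
      · exact hgS ⟨i, h⟩
  · -- no tight set: quotient by a single vector
    push_neg at htight
    have hne : Nonempty ι := Fintype.card_pos_iff.mp (by omega)
    obtain ⟨i0⟩ := hne
    have hW0 : 1 ≤ finrank K (W i0) := by
      have := hW {i0}
      rwa [Finset.sup_singleton, Finset.card_singleton] at this
    have hW0ne : W i0 ≠ ⊥ := by
      intro h
      rw [h] at hW0
      simp [finrank_bot] at hW0
    obtain ⟨w, hwW, hwne⟩ := Submodule.exists_mem_ne_zero_of_ne_bot hW0ne
    set G : Submodule K E := K ∙ w with hG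
    have hGrank : finrank K G = 1 := finrank_span_singleton hwne
    set π := G.mkQ with hπ
    set U : {i // i ≠ i0} → Submodule K (E ⧸ G) := fun j => (W j.1).map π with hU
    have hcard2 : Fintype.card {i // i ≠ i0} = m - 1 := by
      rw [← hcard]
      simp [Fintype.card_subtype_compl]
    have hlt2 : m - 1 < m := by omega
    have hHallU : ∀ T : Finset {i // i ≠ i0},
        T.card ≤ finrank K (T.sup U : Submodule K (E ⧸ G)) := by
      intro T
      rcases T.eq_empty_or_nonempty with rfl | hTne
      · simp
      set T' := T.image Subtype.val with hT'
      have hTT' : T'.card = T.card := Finset.card_image_of_injective _ Subtype.val_injective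
      set X := T'.sup W with hX
      have hmapU : T.sup U = X.map π := by
        rw [hX, hT', Finset.sup_image, submoduleMapFinsetSup]
        rfl
      have e1 : finrank K (X.map π : Submodule K (E ⧸ G)) + finrank K ↥(X ⊓ G)
          = finrank K X := by
        have h := finrank_map_add_finrank_inf_ker π X
        rwa [Submodule.ker_mkQ] at h
      have e2 : finrank K ↥(X ⊓ G) ≤ 1 := by
        rw [← hGrank]
        exact Submodule.finrank_mono inf_le_right
      have hT'ne : T'.Nonempty := hTne.image _
      have hT'univ : T' ≠ Finset.univ := by
        intro h
        have : i0 ∈ T' := h ▸ Finset.mem_univ i0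
        obtain ⟨j, _, hj⟩ := Finset.mem_image.mp this
        exact j.2 hj
      have e3 : T'.card < finrank K (X : Submodule K E) := by
        rw [hX]
        exact lt_of_le_of_ne (hW T') (Ne.symm (htight T' hT'ne hT'univ))
      rw [hmapU]
      omega
    obtain ⟨φ₂, hφ₂mem, hφ₂ind⟩ := IH (m - 1) hlt2 hcard2 U hHallU
    choose χ hχmem hχeq using fun j => Submodule.mem_map.mp (hφ₂mem j)
    set phi : ι → E := fun i => if h : i = i0 then w else χ ⟨i, h⟩ with hphi
    have key : ∀ i : ι, π (phi i) = if h : i = i0 then 0 else φ₂ ⟨i, h⟩ := by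
      intro i
      by_cases h : i = i0
      · simp only [hphi, dif_pos h]
        exact (Submodule.Quotient.mk_eq_zero G).mpr (Submodule.mem_span_singleton_self w)
      · simp only [hphi, dif_neg h]
        exact hχeq ⟨i, h⟩
    refine ⟨phi, ?_, ?_⟩
    · intro i
      by_cases h : i = i0
      · simp only [hphi, dif_pos h]
        exact h ▸ hwW
      · simp only [hphi, dif_neg h]
        exact hχmem ⟨i, h⟩
    · rw [Fintype.linearIndependent_iff]
      intro g hg
      have h1 : ∑ i : ι, g i • π (phi i) = 0 := by
        have h0 := congrArg π hg
        rw [map_sum, map_zero] at h0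
        simpa [map_smul] using h0
      have hzero : ∀ i ∈ ({i0} : Finset ι), g i • π (phi i) = 0 := by
        intro i hi
        rw [Finset.mem_singleton] at hi
        rw [key, dif_pos hi, smul_zero]
      have h2 : ∑ i ∈ ({i0} : Finset ι)ᶜ, g i • π (phi i) = 0 := by
        have h3 := Finset.sum_add_sum_compl ({i0} : Finset ι) (fun i => g i • π (phi i))
        rw [Finset.sum_eq_zero hzero, zero_add] at h3
        exact h3.trans h1
      have hsum2 : ∑ j : {i // i ≠ i0}, g j.1 • φ₂ j = 0 := by
        calc ∑ j : {i // i ≠ i0}, g j.1 • φ₂ j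
            = ∑ j : {i // i ≠ i0}, g j.1 • π (phi j.1) :=
              Finset.sum_congr rfl (fun j _ => by rw [key, dif_neg j.2])
          _ = ∑ i ∈ ({i0} : Finset ι)ᶜ, g i • π (phi i) :=
              (Finset.sum_subtype ({i0} : Finset ι)ᶜ
                (fun x => by simp [Finset.mem_compl])
                (fun i => g i • π (phi i))).symm
          _ = 0 := h2
      have hgS : ∀ j : {i // i ≠ i0}, g j.1 = 0 :=
        Fintype.linearIndependent_iff.mp hφ₂ind _ hsum2
      have hcompl0 : ∑ i ∈ ({i0} : Finset ι)ᶜ, g i • phi i = 0 :=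
        Finset.sum_eq_zero fun i hi => by
          rw [hgS ⟨i, by simpa [Finset.mem_compl] using hi⟩, zero_smul]
      have hsumS : ∑ i ∈ ({i0} : Finset ι), g i • phi i = 0 := by
        have h3 := Finset.sum_add_sum_compl ({i0} : Finset ι) (fun i => g i • phi i)
        rw [hcompl0, add_zero] at h3
        exact h3.trans hg
      have hg0 : g i0 = 0 := by
        rw [Finset.sum_singleton] at hsumS
        have : phi i0 = w := by rw [hphi]; simp
        rw [this] at hsumS
        rcases smul_eq_zero.mp hsumS with h | h
        · exact h
        · exact absurd h hwne
      intro i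
      by_cases h : i = i0
      · exact h ▸ hg0
      · exact hgS ⟨i, h⟩

end Helpers

section Kneser

open Module Submodule

variable {K L : Type*} [Field K] [Field L] [Algebra K L]

/-- The linear Cauchy–Davenport inequality for field extensions with no proper finite
intermediate field: `dim (V*W) ≥ dim V + dim W - 1`. -/
theorem finrank_mul_add_one_le
    (hKL : ¬ ∃ M : IntermediateField K L, M ≠ ⊥ ∧ FiniteDimensional K M) :
    ∀ (m : ℕ) (V W : Submodule K L), Module.finrank K W = m →
      FiniteDimensional K V → FiniteDimensional K W → V ≠ ⊥ → (1 : L) ∈ W →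
      Module.finrank K V + Module.finrank K W ≤
        Module.finrank K (V * W : Submodule K L) + 1 := by
  intro m
  induction m using Nat.strong_induction_on with
  | _ m IH =>
  intro V W hWm hVfd hWfd hVne h1W
  haveI := hVfd; haveI := hWfd
  haveI hVWfd : FiniteDimensional K ↥(V * W) := by
    rw [← Submodule.fg_iff_finiteDimensional]
    exact Submodule.FG.mul ((Submodule.fg_iff_finiteDimensional _).mpr hVfd)
      ((Submodule.fg_iff_finiteDimensional _).mpr hWfd)
  have hVle : V ≤ V * W := by
    intro v hv
    simpa using Submodule.mul_mem_mul hv h1W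
  rcases le_or_gt m 1 with hm | hm
  · -- small case : finrank W ≤ 1
    have h1 : 1 ≤ Module.finrank K W := by
      rcases Nat.eq_zero_or_pos (Module.finrank K W) with h | h
      · exfalso
        rw [Submodule.finrank_eq_zero] at h
        rw [h] at h1W
        exact one_ne_zero ((Submodule.mem_bot K).mp h1W)
      · exact h
    have : Module.finrank K W = 1 := by omega
    rw [this]
    have := Submodule.finrank_mono hVle
    omega
  · by_cases hcase : ∀ g ∈ V, ∀ x ∈ W, g * x ∈ V
    · -- stabilizer argument : W lies in a finite-dimensional intermediate field
      exfalso
      obtain ⟨v₀, hv₀V, hv₀ne⟩ := Submodule.exists_mem_ne_zero_of_ne_bot hVne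
      set H : Subalgebra K L :=
        { carrier := {x | ∀ v ∈ V, x * v ∈ V}
          mul_mem' := fun {a b} ha hb v hv => by
            rw [mul_assoc]; exact ha _ (hb v hv)
          one_mem' := fun v hv => by rwa [one_mul]
          add_mem' := fun {a b} ha hb v hv => by
            rw [add_mul]; exact add_mem (ha v hv) (hb v hv)
          zero_mem' := fun v hv => by rw [zero_mul]; exact V.zero_mem
          algebraMap_mem' := fun r v hv => by
            rw [← Algebra.smul_def]; exact V.smul_mem r hv } with hH
      have hWH : ∀ x ∈ W, x ∈ H := by
        intro x hx v hv
        rw [mul_comm]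
        exact hcase v hv x hx
      -- H is finite dimensional
      have hf : Function.Injective (fun x : H => (⟨x.1 * v₀, x.2 v₀ hv₀V⟩ : V)) := by
        intro x y hxy
        have h := congrArg Subtype.val hxy
        exact Subtype.ext (mul_right_cancel₀ hv₀ne h)
      let f : H →ₗ[K] V :=
        { toFun := fun x => ⟨x.1 * v₀, x.2 v₀ hv₀V⟩
          map_add' := fun x y => by ext; simp [add_mul]
          map_smul' := fun c x => by ext; simp [smul_mul_assoc] }
      haveI hHfd : FiniteDimensional K H := FiniteDimensional.of_injective f hf
      have hfg : (Subalgebra.toSubmodule H).FG :=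
        (Submodule.fg_iff_finiteDimensional _).mpr hHfd
      have hinv : ∀ x ∈ H, x⁻¹ ∈ H := by
        intro x hx
        exact Subalgebra.inv_mem_of_algebraic H (x := (⟨x, hx⟩ : H))
          (IsIntegral.isAlgebraic (IsIntegral.of_mem_of_fg H hfg x hx))
      set M : IntermediateField K L := H.toIntermediateField hinv with hM
      have hMfd : FiniteDimensional K M := hHfd
      have hMne : M ≠ ⊥ := by
        intro hbot
        have hWbot : W ≤ Submodule.span K {(1 : L)} := by
          intro x hx
          have hxM : x ∈ M := hWH x hx
          rw [hbot, IntermediateField.mem_bot] at hxM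
          obtain ⟨k, rfl⟩ := hxM
          rw [Algebra.algebraMap_eq_smul_one]
          exact Submodule.smul_mem _ k (Submodule.mem_span_singleton_self 1)
        have := Submodule.finrank_mono hWbot
        rw [finrank_span_singleton (one_ne_zero : (1 : L) ≠ 0)] at this
        omega
      exact hKL ⟨M, hMne, hMfd⟩
    · -- e-transform
      push_neg at hcase
      obtain ⟨g, hgV, x, hxW, hgx⟩ := hcase
      have hgne : g ≠ 0 := by
        intro h
        rw [h, zero_mul] at hgx
        exact hgx V.zero_mem
      set f := LinearMap.mulLeft K g with hfdef
      have hfinj : Function.Injective f := fun x y h => mul_left_cancel₀ hgne h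
      have hfsurj : Function.Surjective f := by
        intro y
        refine ⟨g⁻¹ * y, ?_⟩
        show g * (g⁻¹ * y) = y
        rw [← mul_assoc, mul_inv_cancel₀ hgne, one_mul]
      set V' := V ⊔ W.map f with hV'
      set W' := W ⊓ V.comap f with hW'
      haveI : FiniteDimensional K ↥(W.map f) := Module.Finite.map W f
      haveI : FiniteDimensional K ↥V' := by
        rw [hV']; infer_instance
      haveI : FiniteDimensional K ↥W' :=
        Submodule.finiteDimensional_of_le (inf_le_left : W' ≤ W)
      have hxW' : x ∉ W' := by
        intro hx
        exact hgx (Submodule.mem_comap.mp hx.2)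
      have hW'lt : W' < W := lt_of_le_of_ne inf_le_left (fun h => hxW' (h ▸ hxW))
      have hrlt : Module.finrank K ↥W' < m := by
        rw [← hWm]
        exact Submodule.finrank_lt_finrank_of_lt hW'lt
      have h1W' : (1 : L) ∈ W' := by
        refine Submodule.mem_inf.mpr ⟨h1W, Submodule.mem_comap.mpr ?_⟩
        show g * 1 ∈ V
        rwa [mul_one]
      have hV'ne : V' ≠ ⊥ := by
        intro h
        exact hVne (le_bot_iff.mp (h ▸ (le_sup_left : V ≤ V')))
      -- rank bookkeeping
      have e1 : Module.finrank K ↥V' + Module.finrank K ↥(V ⊓ W.map f) =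
          Module.finrank K V + Module.finrank K ↥(W.map f) :=
        Submodule.finrank_sup_add_finrank_inf_eq V (W.map f)
      have e2 : Module.finrank K ↥(W.map f) = Module.finrank K W :=
        finrank_map_of_injective f hfinj W
      have hmapW' : W'.map f = W.map f ⊓ V := by
        rw [hW', Submodule.map_inf _ hfinj, Submodule.map_comap_eq,
          LinearMap.range_eq_top.mpr hfsurj, top_inf_eq]
      have e3 : Module.finrank K ↥W' = Module.finrank K ↥(W.map f ⊓ V) := by
        rw [← finrank_map_of_injective f hfinj W', hmapW']
      -- product inclusion
      have hprod : V' * W' ≤ V * W := by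
        rw [Submodule.mul_le]
        intro a ha b hb
        obtain ⟨v, hv, u, hu, rfl⟩ := Submodule.mem_sup.mp ha
        obtain ⟨w, hw, rfl⟩ := Submodule.mem_map.mp hu
        have hbW : b ∈ W := hb.1
        have hgbV : g * b ∈ V := Submodule.mem_comap.mp hb.2
        have : (v + f w) * b = v * b + (g * b) * w := by
          show (v + g * w) * b = v * b + g * b * w
          ring
        rw [this]
        exact Submodule.add_mem _ (Submodule.mul_mem_mul hv hbW)
          (Submodule.mul_mem_mul hgbV hw)
      have hIH := IH (Module.finrank K ↥W') hrlt V' W' rfl inferInstance inferInstance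
        hV'ne h1W'
      have hmono : Module.finrank K ↥(V' * W') ≤ Module.finrank K ↥(V * W) :=
        Submodule.finrank_mono hprod
      have e4 : Module.finrank K ↥(W.map f ⊓ V) = Module.finrank K ↥(V ⊓ W.map f) := by
        rw [inf_comm]
      omega

end Kneser

/-- **No proper finite intermediate extension implies the linear matching property.**
If a field extension `K ⊆ L` contains no intermediate field `M` with `K ⊊ M` and
`M` finite dimensional over `K`, then for any two `n`-dimensional `K`-subspaces
`A`, `B` of `L` with `n ≥ 1` and `1 ∉ B`, `A` is matched to `B`. -/
theorem linearMatchingProperty_of_no_finite_intermediateField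
    {K L : Type*} [Field K] [Field L] [Algebra K L]
    (hKL : ¬ ∃ M : IntermediateField K L, M ≠ ⊥ ∧ FiniteDimensional K M)
    {n : ℕ} (hn : 1 ≤ n) (A B : Subspace K L)
    (hA : Module.finrank K A = n) (hB : Module.finrank K B = n)
    (h1 : (1 : L) ∉ B) :
    IsMatchedTo A B := by
  classical
  intro n' 𝒜
  have hn'' : n' = n := by
    have h := Module.finrank_eq_card_basis 𝒜
    rw [hA, Fintype.card_fin] at h
    omega
  subst hn''
  haveI hAfd : FiniteDimensional K ↥A := .of_finrank_pos (by rw [hA]; omega)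
  haveI hBfd : FiniteDimensional K ↥B := .of_finrank_pos (by rw [hB]; omega)
  set a : Fin n' → L := fun i => (𝒜 i : L) with ha
  have hane : ∀ i, a i ≠ 0 := fun i h => 𝒜.ne_zero i (Subtype.ext h)
  set D : Fin n' → Submodule K L := fun i => B ⊓ A.comap (LinearMap.mulLeft K (a i)) with hD
  set Bsub : Fin n' → Submodule K ↥B := fun i => (D i).comap B.subtype with hBsub
  have halin : LinearIndependent K a :=
    𝒜.linearIndependent.map' A.subtype (Submodule.ker_subtype A)
  -- Step 1: the intersection bound, via the linear Cauchy–Davenport inequality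
  have step1 : ∀ S : Finset (Fin n'),
      Module.finrank K ↥(B ⊓ S.inf D : Submodule K L) + S.card ≤ n' := by
    intro S
    rcases S.eq_empty_or_nonempty with rfl | hSne
    · simp only [Finset.card_empty, add_zero]
      calc Module.finrank K ↥(B ⊓ (∅ : Finset (Fin n')).inf D : Submodule K L)
          ≤ Module.finrank K ↥B := Submodule.finrank_mono inf_le_left
        _ = n' := hB
    · set C : Submodule K L := B ⊓ S.inf D with hC
      haveI : FiniteDimensional K ↥C :=
        Submodule.finiteDimensional_of_le (inf_le_left : C ≤ B)
      have hCB : C ≤ B := inf_le_left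
      set v : {i // i ∈ S} → L := fun j => a j.1 with hv
      have hvlin : LinearIndependent K v := halin.comp Subtype.val Subtype.val_injective
      set V : Submodule K L := Submodule.span K (Set.range v) with hV
      haveI : FiniteDimensional K ↥V := FiniteDimensional.span_of_finite K (Set.finite_range v)
      have hVrank : Module.finrank K ↥V = S.card := by
        rw [hV, finrank_span_eq_card hvlin, Fintype.card_coe]
      haveI : FiniteDimensional K ↥(Submodule.span K {(1 : L)}) :=
        FiniteDimensional.span_of_finite K (Set.finite_singleton _)
      set W : Submodule K L := (Submodule.span K {(1 : L)}) ⊔ C with hW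
      haveI : FiniteDimensional K ↥W := by rw [hW]; infer_instance
      have hWrank : Module.finrank K ↥W = Module.finrank K ↥C + 1 := by
        have hdisj : (Submodule.span K {(1 : L)}) ⊓ C = ⊥ := by
          rw [Submodule.eq_bot_iff]
          intro y hy
          obtain ⟨hy1, hyC⟩ := Submodule.mem_inf.mp hy
          obtain ⟨k, rfl⟩ := Submodule.mem_span_singleton.mp hy1
          by_contra hne
          have hk : k ≠ 0 := by rintro rfl; simp at hne
          have h1B : (1 : L) ∈ B := by
            have hyB : k • (1 : L) ∈ B := hCB hyC
            have := B.smul_mem k⁻¹ hyB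
            rwa [smul_smul, inv_mul_cancel₀ hk, one_smul] at this
          exact h1 h1B
        have e := Submodule.finrank_sup_add_finrank_inf_eq (Submodule.span K {(1 : L)}) C
        rw [hdisj, finrank_bot, finrank_span_singleton (one_ne_zero : (1 : L) ≠ 0)] at e
        rw [hW]
        omega
      have hVA : V ≤ A := Submodule.span_le.mpr (by rintro y ⟨j, rfl⟩; exact (𝒜 j.1).2)
      have hVW : V * W ≤ A := by
        rw [hW, Submodule.mul_sup]
        apply sup_le
        · have h1span : Submodule.span K {(1 : L)} = (1 : Submodule K L) :=
            (Submodule.one_eq_span).symm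
          rw [h1span, Submodule.mul_one]
          exact hVA
        · rw [Submodule.mul_le]
          intro u hu c hc
          induction hu using Submodule.span_induction with
          | mem y hy =>
            obtain ⟨j, rfl⟩ := hy
            have hcD : c ∈ D j.1 := by
              have h' : c ∈ S.inf D := (Submodule.mem_inf.mp (hC ▸ hc)).2
              exact (Finset.inf_le j.2 : S.inf D ≤ D j.1) h'
            exact (Submodule.mem_inf.mp hcD).2
          | zero => rw [zero_mul]; exact A.zero_mem
          | add y z hy hz ihy ihz => rw [add_mul]; exact A.add_mem ihy ihz
          | smul k y hy ihy => rw [smul_mul_assoc]; exact A.smul_mem k ihy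
      obtain ⟨i0, hi0⟩ := hSne
      have hVne : V ≠ ⊥ := by
        intro hbot
        have hmem : v ⟨i0, hi0⟩ ∈ V := Submodule.subset_span ⟨_, rfl⟩
        rw [hbot, Submodule.mem_bot] at hmem
        exact hane i0 hmem
      have h1W : (1 : L) ∈ W :=
        Submodule.mem_sup_left (Submodule.mem_span_singleton_self 1)
      have hkn := finrank_mul_add_one_le hKL (Module.finrank K ↥W) V W rfl
        inferInstance inferInstance hVne h1W
      have hmulA : Module.finrank K ↥(V * W) ≤ n' := by
        rw [← hA]
        exact Submodule.finrank_mono hVW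
      omega
  -- Step 2: Hall condition for the dual annihilators
  set Wd : Fin n' → Submodule K (Module.Dual K ↥B) := fun i => (Bsub i).dualAnnihilator
    with hWd
  have hHall : ∀ T : Finset (Fin n'), T.card ≤ Module.finrank K ↥(T.sup Wd) := by
    intro T
    have h1' : T.sup Wd = (⨅ j : {i // i ∈ T}, Bsub j.1).dualAnnihilator := by
      rw [Subspace.dualAnnihilator_iInf_eq, Finset.sup_eq_iSup, hWd]
      exact (iSup_subtype (f := fun j : {i // i ∈ T} =>
        (Bsub j.1).dualAnnihilator)).symm
    have h2 := Submodule.finrank_quotient_add_finrank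
      (R := K) (M := ↥B) (⨅ j : {i // i ∈ T}, Bsub j.1)
    have h2' : Module.finrank K (↥B ⧸ (⨅ j : {i // i ∈ T}, Bsub j.1)) =
        Module.finrank K ↥((⨅ j : {i // i ∈ T}, Bsub j.1).dualAnnihilator) :=
      LinearEquiv.finrank_eq (Subspace.quotEquivAnnihilator _)
    have h3 : Module.finrank K ↥(⨅ j : {i // i ∈ T}, Bsub j.1) =
        Module.finrank K ↥(B ⊓ T.inf D : Submodule K L) := by
      have e1 : (⨅ j : {i // i ∈ T}, Bsub j.1) =
          (B ⊓ T.inf D : Submodule K L).comap B.subtype := by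
        rw [hBsub, ← Submodule.comap_iInf]
        have e2 : (⨅ j : {i // i ∈ T}, D j.1) = T.inf D := by
          rw [Finset.inf_eq_iInf]
          exact iInf_subtype (f := fun j : {i // i ∈ T} => D j.1)
        rw [e2, Submodule.comap_inf, Submodule.comap_subtype_self, top_inf_eq]
      rw [e1]
      exact LinearEquiv.finrank_eq (Submodule.comapSubtypeEquivOfLe inf_le_left)
    rw [h1']
    have h4 := step1 T
    rw [h3, hB] at h2
    omega
  obtain ⟨φ, hφmem, hφind⟩ :=
    exists_linearIndependent_transversal n' (Fintype.card_fin n') Wd hHall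
  haveI : Nonempty (Fin n') := ⟨⟨0, by omega⟩⟩
  have hcardeq : Fintype.card (Fin n') = Module.finrank K (Module.Dual K ↥B) := by
    rw [Fintype.card_fin, Subspace.dual_finrank_eq, hB]
  set Φ : Module.Basis (Fin n') K (Module.Dual K ↥B) :=
    basisOfLinearIndependentOfCardEqFinrank hφind hcardeq with hΦ
  have hΦeq : ∀ i, Φ i = φ i := fun i =>
    congrFun (coe_basisOfLinearIndependentOfCardEqFinrank hφind hcardeq) i
  set ℬ : Module.Basis (Fin n') K ↥B := Φ.dualBasis.map (Module.evalEquiv K ↥B).symm with hℬ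
  have hrepr : ∀ (x : ↥B) (j : Fin n'), ℬ.repr x j = Φ j x := by
    intro x j
    rw [hℬ]
    simp [Module.Basis.map_repr, Module.Basis.dualBasis_repr]
  refine ⟨ℬ, ?_⟩
  intro i x hx
  obtain ⟨hxAi, hxB⟩ := hx
  have hax : a i * x ∈ A := by
    rw [Set.mem_inv_smul_set_iff₀ (hane i)] at hxAi
    simpa [smul_eq_mul] using hxAi
  have hxD : (⟨x, hxB⟩ : ↥B) ∈ Bsub i := by
    refine Submodule.mem_comap.mpr (Submodule.mem_inf.mpr ⟨hxB, Submodule.mem_comap.mpr ?_⟩)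
    simpa using hax
  have hx0 : Φ i ⟨x, hxB⟩ = 0 := by
    rw [hΦeq]
    exact (Submodule.mem_dualAnnihilator _).mp (hφmem i) _ hxD
  have hspan : (⟨x, hxB⟩ : ↥B) ∈ Submodule.span K (ℬ '' {j | j ≠ i}) := by
    rw [Module.Basis.mem_span_image]
    intro j hj
    simp only [Finset.mem_coe, Finsupp.mem_support_iff] at hj
    show j ≠ i
    intro hji
    exact hj (by rw [hrepr, hji, hx0])
  have hmap : x ∈ Submodule.map B.subtype (Submodule.span K (ℬ '' {j | j ≠ i})) :=
    ⟨_, hspan, rfl⟩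
  rw [Submodule.map_span] at hmap
  have hset : (B.subtype '' (ℬ '' {j | j ≠ i})) =
      Set.range fun j : {j : Fin n' // j ≠ i} => ((ℬ j.1 : ↥B) : L) := by
    ext y
    constructor
    · rintro ⟨-, ⟨j, hj, rfl⟩, rfl⟩
      exact ⟨⟨j, hj⟩, rfl⟩
    · rintro ⟨⟨j, hj⟩, rfl⟩
      exact ⟨ℬ j, ⟨j, hj, rfl⟩, rfl⟩
  rw [hset] at hmap
  exact hmap
end

section
/- Let K ⊆ L be a purely transcendental field extension. Then K ⊆ L satisfies the linear acyclic matching property: for every pair A, B of non-zero finite-dimensional K-subspaces of L with dim A = dim B and AB ∩ A = {0}, there exists at least one acyclic matching from A to B. -/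
open scoped Pointwise

set_option synthInstance.maxHeartbeats 1000000
set_option maxHeartbeats 1000000

/-- A strong matching from `A` to `B` is a `K`-linear isomorphism `φ : A → B` such that
every basis `𝒜` of `A` is matched to the basis `φ(𝒜)` of `B`. -/
def IsStrongMatching {K L : Type*} [Field K] [Field L] [Algebra K L]
    (A B : Subspace K L) (φ : A ≃ₗ[K] B) : Prop :=
  ∀ (n : ℕ) (𝒜 : Module.Basis (Fin n) K A), IsMatchedBasis A B 𝒜 (𝒜.map φ)

/-- Two `K`-linear isomorphisms `f, g : A → B` are equivalent if there is a `K`-linear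
automorphism `φ` of `A` with `a · f(a) = φ(a) · g(φ(a))` for all `a ∈ A`
(products taken in `L`). -/
def AreEquivalentIso {K L : Type*} [Field K] [Field L] [Algebra K L]
    (A B : Subspace K L) (f g : A ≃ₗ[K] B) : Prop :=
  ∃ φ : A ≃ₗ[K] A, ∀ a : A, (a : L) * (f a : L) = ((φ a : L)) * (g (φ a) : L)

/-- An acyclic matching from `A` to `B` is a strong matching `f : A → B` such that every
strong matching `g : A → B` equivalent to `f` satisfies `f = c • g` for some `c ∈ K`. -/
def IsAcyclicLinearMatching {K L : Type*} [Field K] [Field L] [Algebra K L]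
    (A B : Subspace K L) (f : A ≃ₗ[K] B) : Prop :=
  IsStrongMatching A B f ∧
    ∀ g : A ≃ₗ[K] B, IsStrongMatching A B g → AreEquivalentIso A B f g →
      ∃ c : K, ∀ a : A, f a = c • g a

/-- Elementary lemma over a field: if two symmetric products of nonzero "vectors" agree on
diagonal and polarized cross terms, the factor pairs agree up to a scalar and a swap. -/
private lemma core_factor {L : Type*} [Field L] {n : ℕ} (hn : 0 < n) (v1 v2 v3 v4 : Fin n → L)
    (h1 : ∀ i, v1 i ≠ 0) (h3 : ∀ i, v3 i ≠ 0) (h4 : ∀ i, v4 i ≠ 0)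
    (hdiag : ∀ i, v1 i * v2 i = v3 i * v4 i)
    (hcross : ∀ i j, v1 i * v2 j + v1 j * v2 i = v3 i * v4 j + v3 j * v4 i) :
    (∃ u, u ≠ 0 ∧ (∀ i, v3 i = u * v1 i) ∧ (∀ i, v4 i * u = v2 i)) ∨
    (∃ u, u ≠ 0 ∧ (∀ i, v3 i = u * v2 i) ∧ (∀ i, v4 i * u = v1 i)) := by
  have key : ∀ j k, (v3 j * v1 k - v3 k * v1 j) * (v4 j * v1 k - v4 k * v1 j) = 0 := by
    intro j k
    linear_combination (-(v1 k)^2) * hdiag j + (-(v1 j)^2) * hdiag k +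
      (v1 j * v1 k) * hcross j k
  have key' : ∀ j k, v3 j * v1 k = v3 k * v1 j ∨ v4 j * v1 k = v4 k * v1 j := by
    intro j k
    rcases mul_eq_zero.1 (key j k) with h | h
    · exact Or.inl (sub_eq_zero.mp h)
    · exact Or.inr (sub_eq_zero.mp h)
  let p : Fin n := ⟨0, hn⟩
  by_cases hP : ∀ j k, v3 j * v1 k = v3 k * v1 j
  · left
    refine ⟨v3 p / v1 p, div_ne_zero (h3 p) (h1 p), fun i => ?_, fun i => ?_⟩
    · rw [div_mul_eq_mul_div, eq_div_iff (h1 p)]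
      exact hP i p
    · rw [mul_div_assoc', div_eq_iff (h1 p)]
      apply mul_left_cancel₀ (h1 i)
      linear_combination (-(v1 p)) * hdiag i - v4 i * hP i p
  · push_neg at hP
    obtain ⟨a, b, hab⟩ := hP
    have hQab : v4 a * v1 b = v4 b * v1 a := (key' a b).resolve_left hab
    have hQa : ∀ j, v4 j * v1 a = v4 a * v1 j := by
      intro j
      rcases key' j a with hja | hja
      · rcases key' j b with hjb | hjb
        · exfalso
          apply hab
          apply mul_left_cancel₀ (h1 j)
          linear_combination v1 a * hjb - v1 b * hja
        · apply mul_left_cancel₀ (h1 b)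
          linear_combination v1 a * hjb - v1 j * hQab
      · exact hja
    have hii : ∀ i, v4 i * v1 p = v1 i * v4 p := by
      intro i
      apply mul_left_cancel₀ (h1 a)
      linear_combination v1 p * hQa i - v1 i * hQa p
    right
    refine ⟨v1 p / v4 p, div_ne_zero (h1 p) (h4 p), fun i => ?_, fun i => ?_⟩
    · rw [div_mul_eq_mul_div, eq_div_iff (h4 p)]
      apply mul_left_cancel₀ (h1 i)
      linear_combination (-(v1 p)) * hdiag i - v3 i * hii i
    · rw [mul_div_assoc', div_eq_iff (h4 p)]
      exact hii i

/-- A multivariate polynomial over a field which is a root of a monic (one-variable)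
polynomial is a constant. -/
private lemma mv_constant_of_monic_aeval_zero {σ K : Type*} [Field K]
    (p : MvPolynomial σ K) (q : Polynomial K) (hq : q.Monic)
    (h0 : Polynomial.aeval p q = 0) : ∃ c : K, p = MvPolynomial.C c := by
  classical
  set F := q.SplittingField with hF
  let ι : K →+* F := algebraMap K F
  let ψ : MvPolynomial σ K →ₐ[K] MvPolynomial σ F := MvPolynomial.mapAlgHom (Algebra.ofId K F)
  set P : MvPolynomial σ F := ψ p with hPdef
  have h1 : Polynomial.aeval P q = 0 := by
    rw [hPdef, Polynomial.aeval_algHom_apply, h0, map_zero]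
  have h2 : Polynomial.aeval P (q.map ι) = 0 := by
    rwa [Polynomial.aeval_map_algebraMap]
  have hsplits : ((q.map ι).roots.map fun a => Polynomial.X - Polynomial.C a).prod = q.map ι :=
    ((Polynomial.SplittingField.splits q).eq_prod_roots_of_monic (hq.map ι)).symm
  rw [← hsplits, map_multiset_prod] at h2
  have h4 : (0 : MvPolynomial σ F) ∈
      ((q.map ι).roots.map fun a => Polynomial.X - Polynomial.C a).map (Polynomial.aeval P) := by
    rw [← Multiset.prod_eq_zero_iff]
    simpa [Multiset.map_map, Function.comp] using h2
  obtain ⟨g0, hg0, hg0'⟩ := Multiset.mem_map.1 h4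
  obtain ⟨r, hr, rfl⟩ := Multiset.mem_map.1 hg0
  have hPC : P = MvPolynomial.C r := by
    have h5 : P - MvPolynomial.C r = 0 := by
      have := hg0'
      rwa [map_sub, Polynomial.aeval_X, Polynomial.aeval_C, MvPolynomial.algebraMap_eq] at this
    exact sub_eq_zero.mp h5
  refine ⟨MvPolynomial.coeff 0 p, ?_⟩
  apply MvPolynomial.ext
  intro m
  have hcoeff : ∀ m', ι (MvPolynomial.coeff m' p) = MvPolynomial.coeff m' P := by
    intro m'
    rw [hPdef]
    exact (MvPolynomial.coeff_map ι p m').symm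
  by_cases hm : m = 0
  · subst hm; simp [MvPolynomial.coeff_C]
  · have : ι (MvPolynomial.coeff m p) = 0 := by
      rw [hcoeff m, hPC, MvPolynomial.coeff_C, if_neg (Ne.symm hm)]
    rw [MvPolynomial.coeff_C, if_neg (Ne.symm hm)]
    exact ι.injective (by simpa using this)

/-- In a purely transcendental extension, every element integral over the base field
belongs to the base field. -/
private lemma exists_algebraMap_eq {K L : Type*} [Field K] [Field L] [Algebra K L]
    (hKL : ∃ S : Set L, AlgebraicIndependent K ((↑) : S → L) ∧
      IntermediateField.adjoin K S = ⊤)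
    (u : L) (hu : IsIntegral K u) : ∃ c : K, algebraMap K L c = u := by
  classical
  obtain ⟨S, hS, htop⟩ := hKL
  have htop' : IntermediateField.adjoin K (Set.range ((↑) : S → L)) = ⊤ := by
    rwa [Subtype.range_coe]
  let e : FractionRing (MvPolynomial S K) ≃ₐ[K] L :=
    (hS.aevalEquivField.trans (IntermediateField.equivOfEq htop')).trans
      IntermediateField.topEquiv
  set u' : FractionRing (MvPolynomial S K) := e.symm u with hu'def
  have hu'int : IsIntegral K u' := hu.map e.symm.toAlgHom
  have hu'int2 : IsIntegral (MvPolynomial S K) u' := hu'int.tower_top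
  obtain ⟨p, hp⟩ := IsIntegrallyClosed.isIntegral_iff.mp hu'int2
  -- transport the monic polynomial annihilating u' to p
  obtain ⟨q, hqmonic, hq0⟩ := hu'int
  have hq0' : Polynomial.aeval p q = 0 := by
    apply IsFractionRing.injective (MvPolynomial S K) (FractionRing (MvPolynomial S K))
    rw [map_zero, ← Polynomial.aeval_algebraMap_apply, hp]
    exact hq0
  obtain ⟨c, hc⟩ := mv_constant_of_monic_aeval_zero p q hqmonic hq0'
  refine ⟨c, ?_⟩
  have : u = e (algebraMap (MvPolynomial S K) (FractionRing (MvPolynomial S K)) p) := by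
    rw [hp, hu'def, AlgEquiv.apply_symm_apply]
  rw [this, hc]
  have : algebraMap (MvPolynomial S K) (FractionRing (MvPolynomial S K)) (MvPolynomial.C c) =
      algebraMap K (FractionRing (MvPolynomial S K)) c := by
    rw [← MvPolynomial.algebraMap_eq, ← IsScalarTower.algebraMap_apply]
  rw [this, AlgEquiv.commutes]

/-- Under the hypothesis `A·B ⊓ A = ⊥`, *every* isomorphism is a strong matching. -/
private lemma strong_all {K L : Type*} [Field K] [Field L] [Algebra K L] {A B : Subspace K L}
    (h : A * B ⊓ A = ⊥) (f : A ≃ₗ[K] B) : IsStrongMatching A B f := by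
  intro n 𝒜 i x hx
  obtain ⟨hx1, hx2⟩ := hx
  obtain ⟨y, hy, rfl⟩ := hx1
  have ha : ((𝒜 i : A) : L) ≠ 0 := by
    simpa using 𝒜.ne_zero i
  have hxB : ((𝒜 i : A) : L)⁻¹ • y ∈ B := hx2
  have hmul : ((𝒜 i : A) : L) * (((𝒜 i : A) : L)⁻¹ • y) ∈ A * B ⊓ A := by
    constructor
    · exact Submodule.mul_mem_mul (𝒜 i).2 hxB
    · have hy' : ((𝒜 i : A) : L) * (((𝒜 i : A) : L)⁻¹ • y) = y := by
        rw [smul_eq_mul, mul_inv_cancel_left₀ ha]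
      rw [hy']
      exact hy
  rw [h, Submodule.mem_bot] at hmul
  have hx0 : ((𝒜 i : A) : L)⁻¹ • y = 0 := by
    rcases mul_eq_zero.1 hmul with h' | h'
    · exact absurd h' ha
    · exact h'
  have hx0' : (fun x => ((𝒜 i : A) : L)⁻¹ • x) y = (0 : L) := hx0
  rw [hx0']
  exact SetLike.mem_coe.mpr (Submodule.zero_mem _)

/-- The shared conclusion step: if `φ` acts on `A` as multiplication by `U ∈ L` and
`g ∘ φ` times `U` recovers `f` on a basis, then `f` is a `K`-scalar multiple of `g`. -/
private lemma case_shared {K L : Type*} [Field K] [Field L] [Algebra K L]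
    (hKL : ∃ S : Set L, AlgebraicIndependent K ((↑) : S → L) ∧
      IntermediateField.adjoin K S = ⊤)
    {A B : Subspace K L} (hA : A ≠ ⊥) [FiniteDimensional K A]
    {n : ℕ} (𝒜 : Module.Basis (Fin n) K A) (f g : A ≃ₗ[K] B) (φ : A ≃ₗ[K] A) (U : L)
    (hU3 : ∀ i, ((φ (𝒜 i) : A) : L) = U * ((𝒜 i : A) : L))
    (hU4 : ∀ i, ((g (φ (𝒜 i)) : B) : L) * U = ((f (𝒜 i) : B) : L)) :
    ∃ c : K, ∀ a : A, f a = c • g a := by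
  have hU3' : ∀ a : A, ((φ a : A) : L) = U * (a : L) := by
    have heq : A.subtype ∘ₗ (φ : A →ₗ[K] A) = (LinearMap.mulLeft K U) ∘ₗ A.subtype :=
      𝒜.ext fun i => by simpa using hU3 i
    intro a
    simpa using LinearMap.congr_fun heq a
  have hfg : (A : Submodule K L).FG := Module.Finite.iff_fg.mp ‹FiniteDimensional K A›
  have hint : IsIntegral K U := by
    apply isIntegral_of_smul_mem_submodule (A : Submodule K L) hA hfg U
    intro x hx
    rw [smul_eq_mul]
    have hmem := (φ ⟨x, hx⟩).2
    rwa [hU3' ⟨x, hx⟩] at hmem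
  obtain ⟨c, hc⟩ := exists_algebraMap_eq hKL U hint
  have hφi : ∀ i, φ (𝒜 i) = c • (𝒜 i) := by
    intro i
    apply Subtype.ext
    rw [hU3 i, ← hc, Submodule.coe_smul, Algebra.smul_def]
  refine ⟨c ^ 2, ?_⟩
  have heq : (f : A →ₗ[K] B) = (c ^ 2) • (g : A →ₗ[K] B) := by
    apply 𝒜.ext
    intro i
    apply Subtype.ext
    have h4 := hU4 i
    rw [hφi i, map_smul] at h4
    have : ((c • g (𝒜 i) : B) : L) = algebraMap K L c * ((g (𝒜 i) : B) : L) := by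
      rw [Submodule.coe_smul, Algebra.smul_def]
    rw [this, hc] at h4
    have hgoal : ((f (𝒜 i) : B) : L) = (U * ((g (𝒜 i) : B) : L)) * U := h4.symm ▸ by ring
    calc ((f (𝒜 i) : B) : L) = (U * ((g (𝒜 i) : B) : L)) * U := hgoal
      _ = algebraMap K L (c ^ 2) * ((g (𝒜 i) : B) : L) := by rw [← hc]; ring_nf; rw [map_pow]; ring
      _ = (((c ^ 2) • (g (𝒜 i)) : B) : L) := by rw [Submodule.coe_smul, Algebra.smul_def]
      _ = ((((c ^ 2) • (g : A →ₗ[K] B)) (𝒜 i) : B) : L) := by simp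
  intro a
  have := LinearMap.congr_fun heq a
  simpa using this

/-- Application of `core_factor` to the polarized equivalence identity. -/
private lemma apply_core {K L : Type*} [Field K] [Field L] [Algebra K L]
    {A B : Subspace K L} {n : ℕ} (hn : 0 < n)
    (𝒜 : Module.Basis (Fin n) K A) (f g : A ≃ₗ[K] B) (φ : A ≃ₗ[K] A)
    (hφ : ∀ a : A, (a : L) * (f a : L) = ((φ a : L)) * (g (φ a) : L)) :
    (∃ u : L, u ≠ 0 ∧ (∀ i, ((φ (𝒜 i) : A) : L) = u * ((𝒜 i : A) : L)) ∧
      (∀ i, ((g (φ (𝒜 i)) : B) : L) * u = ((f (𝒜 i) : B) : L))) ∨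
    (∃ u : L, u ≠ 0 ∧ (∀ i, ((φ (𝒜 i) : A) : L) = u * ((f (𝒜 i) : B) : L)) ∧
      (∀ i, ((g (φ (𝒜 i)) : B) : L) * u = ((𝒜 i : A) : L))) := by
  have h1 : ∀ i, ((𝒜 i : A) : L) ≠ 0 := fun i => by
    simp only [ne_eq, ZeroMemClass.coe_eq_zero]
    exact 𝒜.ne_zero i
  have h3 : ∀ i, ((φ (𝒜 i) : A) : L) ≠ 0 := fun i => by
    simp only [ne_eq, ZeroMemClass.coe_eq_zero]
    exact φ.map_ne_zero_iff.2 (𝒜.ne_zero i)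
  have h4 : ∀ i, ((g (φ (𝒜 i)) : B) : L) ≠ 0 := fun i => by
    simp only [ne_eq, ZeroMemClass.coe_eq_zero]
    exact g.map_ne_zero_iff.2 (φ.map_ne_zero_iff.2 (𝒜.ne_zero i))
  have hdiag : ∀ i, ((𝒜 i : A) : L) * ((f (𝒜 i) : B) : L) =
      ((φ (𝒜 i) : A) : L) * ((g (φ (𝒜 i)) : B) : L) := fun i => hφ (𝒜 i)
  have hcross : ∀ i j, ((𝒜 i : A) : L) * ((f (𝒜 j) : B) : L) +
      ((𝒜 j : A) : L) * ((f (𝒜 i) : B) : L) =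
      ((φ (𝒜 i) : A) : L) * ((g (φ (𝒜 j)) : B) : L) +
      ((φ (𝒜 j) : A) : L) * ((g (φ (𝒜 i)) : B) : L) := by
    intro i j
    have hsum := hφ (𝒜 i + 𝒜 j)
    simp only [map_add, Submodule.coe_add] at hsum
    linear_combination hsum - hφ (𝒜 i) - hφ (𝒜 j)
  exact core_factor hn _ _ _ _ h1 h3 h4 hdiag hcross


/-- **Purely transcendental extensions have the linear acyclic matching property.**
If `L = K(S)` for some algebraically independent set `S` over `K`, then for every pair
`A`, `B` of non-zero `K`-subspaces of `L` of equal finite dimension with `AB ∩ A = {0}`,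
there exists an acyclic matching from `A` to `B`. -/
theorem purelyTranscendental_hasLinearAcyclicMatchingProperty
    {K L : Type*} [Field K] [Field L] [Algebra K L]
    (hKL : ∃ S : Set L, AlgebraicIndependent K ((↑) : S → L) ∧
      IntermediateField.adjoin K S = ⊤)
    (A B : Subspace K L) (hA : A ≠ ⊥) (hB : B ≠ ⊥)
    (hfinA : FiniteDimensional K A) (hfinB : FiniteDimensional K B)
    (hdim : Module.finrank K A = Module.finrank K B)
    (h : A * B ⊓ A = ⊥) :
    ∃ f : A ≃ₗ[K] B, IsAcyclicLinearMatching A B f := by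
  classical
  haveI := hfinA
  haveI := hfinB
  have hn : 0 < Module.finrank K A := by
    rw [Module.finrank_pos_iff]
    exact (Submodule.nontrivial_iff_ne_bot).mpr hA
  let 𝒜 : Module.Basis (Fin (Module.finrank K A)) K A := Module.finBasis K A
  by_cases hex : ∃ u : L, u ≠ 0 ∧ ∀ b : L, b ∈ B ↔ ∃ a ∈ A, b = u * a
  · obtain ⟨w, hw0, hw⟩ := hex
    let f0 : A →ₗ[K] B :=
      { toFun := fun a => ⟨w * (a : L), (hw _).2 ⟨a, a.2, rfl⟩⟩
        map_add' := fun x y => Subtype.ext (by simp [mul_add])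
        map_smul' := fun k x => Subtype.ext (by simp [Algebra.mul_smul_comm]) }
    have hbij : Function.Bijective f0 := by
      constructor
      · intro x y hxy
        apply Subtype.ext
        exact mul_left_cancel₀ hw0 (congrArg Subtype.val hxy)
      · rintro ⟨b, hb⟩
        obtain ⟨a, ha, rfl⟩ := (hw b).1 hb
        exact ⟨⟨a, ha⟩, rfl⟩
    let f : A ≃ₗ[K] B := LinearEquiv.ofBijective f0 hbij
    have hfdef : ∀ a : A, ((f a : B) : L) = w * (a : L) := fun a => rfl
    refine ⟨f, strong_all h f, ?_⟩
    rintro g hg ⟨φ, hφ⟩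
    rcases apply_core hn 𝒜 f g φ hφ with ⟨u, hu0, hu3, hu4⟩ | ⟨u, hu0, hu3, hu4⟩
    · exact case_shared hKL hA 𝒜 f g φ u hu3 hu4
    · apply case_shared hKL hA 𝒜 f g φ (u * w)
      · intro i
        rw [hu3 i, hfdef]
        ring
      · intro i
        rw [← mul_assoc, hu4 i, hfdef]
        ring
  · let f : A ≃ₗ[K] B := LinearEquiv.ofFinrankEq _ _ hdim
    refine ⟨f, strong_all h f, ?_⟩
    rintro g hg ⟨φ, hφ⟩
    rcases apply_core hn 𝒜 f g φ hφ with ⟨u, hu0, hu3, hu4⟩ | ⟨u, hu0, hu3, hu4⟩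
    · exact case_shared hKL hA 𝒜 f g φ u hu3 hu4
    · exfalso
      apply hex
      have hall : ∀ a : A, ((φ a : A) : L) = u * ((f a : B) : L) := by
        have heq : A.subtype ∘ₗ (φ : A →ₗ[K] A) =
            (LinearMap.mulLeft K u) ∘ₗ (B.subtype ∘ₗ (f : A →ₗ[K] B)) :=
          𝒜.ext fun i => by simpa using hu3 i
        intro a
        simpa using LinearMap.congr_fun heq a
      refine ⟨u⁻¹, inv_ne_zero hu0, fun b => ⟨fun hb => ?_, ?_⟩⟩
      · refine ⟨((φ (f.symm ⟨b, hb⟩) : A) : L), (φ (f.symm ⟨b, hb⟩)).2, ?_⟩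
        rw [hall (f.symm ⟨b, hb⟩), LinearEquiv.apply_symm_apply]
        rw [inv_mul_cancel_left₀ hu0]
      · rintro ⟨a, ha, rfl⟩
        have h1 := hall (φ.symm ⟨a, ha⟩)
        rw [LinearEquiv.apply_symm_apply] at h1
        set b : L := ((f (φ.symm ⟨a, ha⟩) : B) : L) with hb
        have h2 : a = u * b := h1
        have h3 : u⁻¹ * a = b := by rw [h2, inv_mul_cancel_left₀ hu0]
        rw [h3]
        exact (f (φ.symm ⟨a, ha⟩)).2
end
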